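/- Let G₁ and G₂ be groups, h ∈ G₁ with h ≠ 1, and k ∈ G₂ with k ≠ 1. Let Γ = G₁ ∗ G₂ be the free product and set w := inl(h) · inr(k) ∈ Γ. In ℓ²(Γ;ℂ), let η := (δ₁ + δ_w)/‖δ₁ + δ_w‖. Then ⟨δ₁, λ(w)δ₁⟩ = 0 while ⟨η, λ(w)η⟩ = 1/2. -/

import Mathlib

open Monoid
open scoped ENNReal InnerProductSpace

noncomputable section

private theorem translMem {X : Type*} (e : X ≃ X) (f : lp (fun _ : X => ℂ) 2) :
    Memℓp (fun x => f (e x)) 2 := by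
  apply memℓp_gen
  exact (Equiv.summable_iff e (f := fun i => ‖f i‖ ^ (2 : ℝ≥0∞).toReal)).2
    ((lp.memℓp f).summable (by norm_num))

/-- The linear isometry equivalence `f ↦ f ∘ e` of `ℓ²(X;ℂ)` induced by a bijection
`e` of `X`. -/
def translIso {X : Type*} (e : X ≃ X) :
    lp (fun _ : X => ℂ) 2 ≃ₗᵢ[ℂ] lp (fun _ : X => ℂ) 2 where
  toFun f := ⟨fun x => f (e x), translMem e f⟩
  invFun f := ⟨fun x => f (e.symm x), translMem e.symm f⟩
  map_add' f g := by ext x; simp [lp.coeFn_add]; rfl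
  map_smul' c f := by ext x; simp [lp.coeFn_smul]
  left_inv f := by ext x; simp
  right_inv f := by ext x; simp
  norm_map' f := by
    rw [lp.norm_eq_tsum_rpow (by norm_num), lp.norm_eq_tsum_rpow (by norm_num)]
    congr 1
    exact e.tsum_eq (f := fun x => ‖f x‖ ^ (2 : ℝ≥0∞).toReal)

/-- The left translation `λ(g)` on `ℓ²(Γ;ℂ)`, the unitary given by
`(λ(g) f)(x) = f (g⁻¹ * x)`. -/
def leftTransl {Γ : Type*} [Group Γ] (g : Γ) :
    lp (fun _ : Γ => ℂ) 2 ≃ₗᵢ[ℂ] lp (fun _ : Γ => ℂ) 2 :=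
  translIso (Equiv.mulLeft g⁻¹)

private lemma coprod_sq_ne_one {G₁ : Type u} {G₂ : Type v} [Group G₁] [Group G₂]
    (h : G₁) (hh : h ≠ 1) (k : G₂) (hk : k ≠ 1) :
    (Coprod.inl h * Coprod.inr k) * (Coprod.inl h * Coprod.inr k) ≠ (1 : Coprod G₁ G₂) := by
  classical
  letI M : Bool → Type (max u v) := fun b => cond b (ULift.{u} G₂) (ULift.{v} G₁)
  letI : ∀ b, Group (M b) := fun b => by cases b <;> (dsimp only [M, cond]; infer_instance)
  let φ₁ : G₁ →* CoprodI M :=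
    (CoprodI.of (i := false)).comp (MulEquiv.ulift : ULift G₁ ≃* G₁).symm.toMonoidHom
  let φ₂ : G₂ →* CoprodI M :=
    (CoprodI.of (i := true)).comp (MulEquiv.ulift : ULift G₂ ≃* G₂).symm.toMonoidHom
  let φ : Coprod G₁ G₂ →* CoprodI M := Coprod.lift φ₁ φ₂
  intro heq
  have h2 := congrArg φ heq
  simp only [φ, map_one, Coprod.lift_apply_inl, Coprod.lift_apply_inr] at h2
  have hh' : (ULift.up h : M false) ≠ 1 := fun e => hh congr(($e).down)
  have hk' : (ULift.up k : M true) ≠ 1 := fun e => hk congr(($e).down)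
  let sh : CoprodI.NeWord M false false := .singleton _ hh'
  let sk : CoprodI.NeWord M true true := .singleton _ hk'
  let u : CoprodI.NeWord M false true := .append sh (by decide) sk
  let nw : CoprodI.NeWord M false true := .append u (by decide) u
  have hp : nw.prod = 1 := by
    simp [nw, u, sh, sk, CoprodI.NeWord.append_prod, φ₁, φ₂] at h2 ⊢; exact h2
  have hinj : Function.Injective (CoprodI.Word.prod (M := M)) :=
    (CoprodI.Word.equiv (M := M)).symm.injective
  have hE : nw.toWord = CoprodI.Word.empty := hinj (by
    rw [CoprodI.Word.prod_empty]; exact hp)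
  exact nw.toList_ne_nil (by
    have := congrArg CoprodI.Word.toList hE
    simpa [CoprodI.NeWord.toWord, CoprodI.Word.empty] using this)

private lemma translIso_single {X : Type*} [DecidableEq X] (e : X ≃ X) (x : X) (c : ℂ) :
    translIso e (lp.single 2 x c) = lp.single 2 (e.symm x) c := by
  ext y
  show (lp.single 2 x c : ∀ _ : X, ℂ) (e y) = _
  rw [lp.single_apply, lp.single_apply]
  simp [Pi.single_apply, Equiv.eq_symm_apply, eq_comm]

private lemma leftTransl_single {Γ : Type*} [Group Γ] [DecidableEq Γ] (g : Γ) (x : Γ) (c : ℂ) :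
    leftTransl g (lp.single 2 x c) = lp.single 2 (g * x) c := by
  rw [leftTransl, translIso_single]
  simp

private lemma inner_single_single {Γ : Type*} [DecidableEq Γ] (x y : Γ) :
    ⟪(lp.single 2 x (1:ℂ) : lp (fun _ : Γ => ℂ) 2), lp.single 2 y (1:ℂ)⟫_ℂ
      = if x = y then 1 else 0 := by
  rw [lp.inner_single_left, lp.single_apply]
  split_ifs with h1 <;> simp_all [RCLike.inner_apply]

/-- computation of Example 3.5. Let `h ≠ 1` in `G₁`, `k ≠ 1` in
`G₂`, `Γ = G₁ ∗ G₂` the free product, `w = inl h * inr k`, and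
`η = (δ₁ + δ_w)/‖δ₁ + δ_w‖` in `ℓ²(Γ;ℂ)`. Then `⟪δ₁, λ(w) δ₁⟫ = 0`
while `⟪η, λ(w) η⟫ = 1/2`. -/
theorem free_joinings_stmt15
    {G₁ G₂ : Type*} [Group G₁] [Group G₂] [DecidableEq (Coprod G₁ G₂)]
    (h : G₁) (hh : h ≠ 1) (k : G₂) (hk : k ≠ 1) :
    let Γ := Coprod G₁ G₂
    let w : Γ := Coprod.inl h * Coprod.inr k
    let δ₁ : lp (fun _ : Γ => ℂ) 2 := lp.single 2 (1 : Γ) (1 : ℂ)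
    let δw : lp (fun _ : Γ => ℂ) 2 := lp.single 2 w (1 : ℂ)
    let η : lp (fun _ : Γ => ℂ) 2 := ‖δ₁ + δw‖⁻¹ • (δ₁ + δw)
    ⟪δ₁, leftTransl w δ₁⟫_ℂ = 0 ∧ ⟪η, leftTransl w η⟫_ℂ = 1 / 2 := by
  intro Γ w δ₁ δw η
  have hw2 : w * w ≠ 1 := coprod_sq_ne_one h hh k hk
  have hw : w ≠ 1 := fun e => hw2 (by rw [e, mul_one])
  have hne : w ≠ w * w := fun e =>
    hw (mul_left_cancel (a := w) (b := (1 : Γ)) (by rw [mul_one, ← e])).symm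
  have hT1 : leftTransl w δ₁ = δw := by
    simpa using leftTransl_single (Γ := Γ) w 1 1
  have hTw : leftTransl w δw = lp.single 2 (w * w) (1 : ℂ) := leftTransl_single w w 1
  have hvv : ⟪δ₁ + δw, δ₁ + δw⟫_ℂ = 2 := by
    simp only [inner_add_left, inner_add_right, δ₁, δw, inner_single_single]
    rw [if_neg (Ne.symm hw), if_neg hw]
    norm_num
  have hTv : leftTransl w (δ₁ + δw) = δw + lp.single 2 (w * w) (1 : ℂ) := by
    rw [map_add, hT1, hTw]
  have hvTv : ⟪δ₁ + δw, leftTransl w (δ₁ + δw)⟫_ℂ = 1 := by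
    rw [hTv]
    simp only [inner_add_left, inner_add_right, δ₁, δw, inner_single_single]
    rw [if_neg hne, if_neg (Ne.symm hw), if_neg (Ne.symm hw2)]
    norm_num
  have hnR : ‖δ₁ + δw‖ ^ 2 = 2 := by
    rw [@norm_sq_eq_re_inner ℂ, hvv]; norm_num
  have hn : ((‖δ₁ + δw‖ : ℝ) : ℂ) ^ 2 = 2 := by exact_mod_cast hnR
  have hr : ((‖δ₁ + δw‖ : ℝ) : ℂ) ≠ 0 := by
    intro e; rw [e] at hn; norm_num at hn
  constructor
  · rw [hT1]
    exact (inner_single_single (1 : Γ) w).trans (if_neg (Ne.symm hw))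
  · have hη : η = ((‖δ₁ + δw‖⁻¹ : ℝ) : ℂ) • (δ₁ + δw) :=
      RCLike.real_smul_eq_coe_smul (K := ℂ) _ _
    rw [hη, LinearIsometryEquiv.map_smul, inner_smul_left, inner_smul_right, hvTv,
      Complex.conj_ofReal, mul_one, Complex.ofReal_inv, ← mul_inv, ← sq, hn]
    norm_num

end
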